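/- Let R and S be positive integers with R even, let H be an R × S complex matrix, and let x, y : ℝ → ℂ with x periodic of period 2π. Suppose that for all ω ∈ ℝ and all l ∈ {0, …, R−1}: y((ω − 2πl)/R) = Σ_{s=0}^{S−1} H_{l,s} · x((ω − 2πs)/S). Then for all ω ∈ ℝ and all l ∈ {0, …, R−1}: y(π + (ω − 2πl)/R) = Σ_{s=0}^{S−1} H_{l,(s + R/2) mod S} · x((ω − 2πs)/S). -/

import Mathlib

open scoped Real

/-- Lemma 2: if the `R × S` modulation matrix `H` realizes the componentwise
modulation-domain relation between `x` and `y` (with `x` of period `2π`), then the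
matrix with columns cyclically rotated by `R/2` realizes the relation with `ω/R`
replaced by `π + ω/R`. -/
theorem stmt_14 (R S : ℕ) (hR : 0 < R) (hS : 0 < S) (hReven : Even R)
    (H : Matrix (Fin R) (Fin S) ℂ) (x y : ℝ → ℂ)
    (hper : ∀ ω : ℝ, x (ω + 2 * π) = x ω)
    (hmod : ∀ ω : ℝ, ∀ l : Fin R,
      y ((ω - 2 * π * (l : ℕ)) / (R : ℝ)) =
        ∑ s : Fin S, H l s * x ((ω - 2 * π * (s : ℕ)) / (S : ℝ))) :
    ∀ ω : ℝ, ∀ l : Fin R,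
      y (π + (ω - 2 * π * (l : ℕ)) / (R : ℝ)) =
        ∑ s : Fin S,
          H l ⟨((s : ℕ) + R / 2) % S, Nat.mod_lt _ hS⟩ *
            x ((ω - 2 * π * (s : ℕ)) / (S : ℝ)) := by
  intro ω l
  haveI : NeZero S := ⟨hS.ne'⟩
  have hRne : (R : ℝ) ≠ 0 := Nat.cast_ne_zero.mpr hR.ne'
  have hSne : (S : ℝ) ≠ 0 := Nat.cast_ne_zero.mpr hS.ne'
  -- x is invariant under adding natural multiples of 2π
  have hx : ∀ (a : ℝ) (q : ℕ), x (a + 2 * π * q) = x a := by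
    intro a q
    induction q with
    | zero => simp
    | succ n ih =>
      have : a + 2 * π * (n + 1 : ℕ) = (a + 2 * π * n) + 2 * π := by
        push_cast; ring
      rw [this, hper, ih]
  have key := hmod (ω + π * R) l
  have hL : (ω + π * R - 2 * π * (l : ℕ)) / (R : ℝ)
      = π + (ω - 2 * π * (l : ℕ)) / (R : ℝ) := by
    field_simp; ring
  rw [hL] at key
  rw [key]
  have hR2 : (R : ℝ) = 2 * ((R / 2 : ℕ) : ℝ) := by
    conv_lhs => rw [← Nat.div_two_mul_two_of_even hReven]
    push_cast; ring
  set c : Fin S := Fin.ofNat S (R / 2) with hc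
  refine Fintype.sum_equiv (Equiv.subRight c) _ _ ?_
  intro t
  set u : Fin S := t - c with hu
  have huc : u + c = t := sub_add_cancel t c
  have hval : ((u : ℕ) + R / 2) % S = (t : ℕ) := by
    have h1 : ((u + c : Fin S) : ℕ) = ((u : ℕ) + (c : ℕ)) % S := rfl
    have h2 : (c : ℕ) = R / 2 % S := rfl
    rw [huc] at h1
    rw [h2, Nat.add_mod_mod] at h1
    exact h1.symm
  have hHeq : H l t = H l ⟨((u : ℕ) + R / 2) % S, Nat.mod_lt _ hS⟩ := by
    congr 1
    exact Fin.ext hval.symm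
  have : (Equiv.subRight c) t = u := rfl
  rw [this, hHeq]
  congr 1
  -- now the x arguments
  have hdm := Nat.div_add_mod ((u : ℕ) + R / 2) S
  rw [hval] at hdm
  set q := ((u : ℕ) + R / 2) / S with hq
  have hcast : ((t : ℕ) : ℝ) = (u : ℕ) + ((R / 2 : ℕ) : ℝ) - (S : ℝ) * q := by
    have : (S : ℝ) * q + (t : ℕ) = (u : ℕ) + ((R / 2 : ℕ) : ℝ) := by
      exact_mod_cast congrArg (Nat.cast : ℕ → ℝ) hdm
    linarith
  have harg : (ω + π * R - 2 * π * ((t : ℕ) : ℝ)) / (S : ℝ)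
      = (ω - 2 * π * ((u : ℕ) : ℝ)) / (S : ℝ) + 2 * π * q := by
    rw [hcast, hR2]
    field_simp
    ring
  rw [harg, hx]
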